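/- arXiv:1608.00860 — 2 statements merged into one kernel-verified Lean document; each statement's English description precedes it below -/
import Mathlib

section
/- Let k be a kernel on 𝒳 and let (T, {S_i}, {X̄_i}) be a hierarchical partitioning of 𝒳 (as in the context). Let j and l be two distinct leaves of T, let r be their least common ancestor, and let (j, j₁, j₂, …, j_s, r) and (l, l₁, l₂, …, l_t, r) be the paths in T connecting j to r and l to r respectively. Let x ∈ S_j and x' ∈ S_l. If x belongs to each landmark tuple X̄_{j₁}, …, X̄_{j_s}, if x' belongs to each landmark tuple X̄_{l₁}, …, X̄_{l_t}, and if at least one of x, x' belongs to X̄_r, then k_hier(x,x') = k(x,x'). -/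
open scoped BigOperators

/-- A symmetric function `k` is a positive-definite kernel if for every finite list of
pairwise distinct points `x₁,…,xₘ` and all real coefficients `α₁,…,αₘ`,
`∑ᵢⱼ αᵢ αⱼ k(xᵢ,xⱼ) ≥ 0`. -/
def PosDefKernel {𝒳 : Type*} (k : 𝒳 → 𝒳 → ℝ) : Prop :=
  ∀ (m : ℕ) (x : Fin m → 𝒳), Function.Injective x →
    ∀ α : Fin m → ℝ, 0 ≤ ∑ i, ∑ j, α i * α j * k (x i) (x j)

/-- A symmetric function `k` is a strictly positive-definite kernel if for every finite list of
pairwise distinct points `x₁,…,xₘ` and all real coefficients not all zero,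
`∑ᵢⱼ αᵢ αⱼ k(xᵢ,xⱼ) > 0`. -/
def StrictPosDefKernel {𝒳 : Type*} (k : 𝒳 → 𝒳 → ℝ) : Prop :=
  ∀ (m : ℕ) (x : Fin m → 𝒳), Function.Injective x →
    ∀ α : Fin m → ℝ, α ≠ 0 → 0 < ∑ i, ∑ j, α i * α j * k (x i) (x j)

/-- A hierarchical partitioning of a set `𝒳`: a finite rooted tree (nodes indexed by
`Fin numNodes`, each nonroot node pointing to its `parent`; nodes are topologically ordered so
that the parent of a nonroot node has a smaller index), assigning to each node `i` a nonempty
subset `S i ⊆ 𝒳` with `S root = 𝒳`, such that the children of any internal node partition it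
into pairwise disjoint nonempty cells, every internal node has at least two children, and each
internal node `i` carries a tuple `lm i` of `nlm i` pairwise distinct landmark points belonging
to `S i` (leaves carry no landmark points). -/
structure HierPartition (𝒳 : Type*) where
  numNodes : ℕ
  root : Fin numNodes
  parent : Fin numNodes → Fin numNodes
  S : Fin numNodes → Set 𝒳
  nlm : Fin numNodes → ℕ
  lm : (i : Fin numNodes) → Fin (nlm i) → 𝒳
  parent_root : parent root = root
  parent_lt : ∀ i, i ≠ root → parent i < i
  S_root : S root = Set.univ
  S_nonempty : ∀ i, (S i).Nonempty
  S_subset : ∀ j, j ≠ root → S j ⊆ S (parent j)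
  S_cover : ∀ i, (∃ j, j ≠ root ∧ parent j = i) →
    ∀ x ∈ S i, ∃ j, j ≠ root ∧ parent j = i ∧ x ∈ S j
  S_disjoint : ∀ j j', j ≠ root → j' ≠ root → parent j = parent j' → j ≠ j' →
    Disjoint (S j) (S j')
  two_children : ∀ i, (∃ j, j ≠ root ∧ parent j = i) →
    ∃ j j', j ≠ root ∧ j' ≠ root ∧ parent j = i ∧ parent j' = i ∧ j ≠ j'
  lm_mem : ∀ i a, lm i a ∈ S i
  lm_inj : ∀ i, Function.Injective (lm i)
  leaf_nlm : ∀ i, (¬∃ j, j ≠ root ∧ parent j = i) → nlm i = 0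

namespace HierPartition

variable {𝒳 : Type*}

/-- A node of the tree is a leaf if it has no children. -/
def IsLeaf (H : HierPartition 𝒳) (i : Fin H.numNodes) : Prop :=
  ¬∃ j, j ≠ H.root ∧ H.parent j = i

/-- The kernel matrix `K(X̄ᵢ, X̄ᵢ)` on the landmark points of node `i`. -/
noncomputable def Kmat (k : 𝒳 → 𝒳 → ℝ) (H : HierPartition 𝒳) (i : Fin H.numNodes) :
    Matrix (Fin (H.nlm i)) (Fin (H.nlm i)) ℝ :=
  Matrix.of fun a b => k (H.lm i a) (H.lm i b)

open Classical in
/-- The row vector `ψ⁽ⁱ⁾(x, X̄ᵢ)` of the hierarchical composition, defined recursively: if the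
child `j` of `i` containing `x` is a leaf then `ψ⁽ⁱ⁾(x,X̄ᵢ) = k(x,X̄ᵢ)`, and otherwise
`ψ⁽ⁱ⁾(x,X̄ᵢ) = ψ⁽ʲ⁾(x,X̄ⱼ)·K(X̄ⱼ,X̄ⱼ)⁻¹·K(X̄ⱼ,X̄ᵢ)`.  (Junk values are returned when `i` is a
leaf or when `x ∉ Sᵢ`.) -/
noncomputable def psi (k : 𝒳 → 𝒳 → ℝ) (H : HierPartition 𝒳) :
    (i : Fin H.numNodes) → 𝒳 → Fin (H.nlm i) → ℝ := fun i x =>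
  if h : ∃ j, j ≠ H.root ∧ H.parent j = i ∧ x ∈ H.S j then
    if H.IsLeaf (Classical.choose h) then fun a => k x (H.lm i a)
    else fun a => ∑ b, ∑ c,
      psi k H (Classical.choose h) x b *
        ((Kmat k H (Classical.choose h))⁻¹ b c) *
        k (H.lm (Classical.choose h) c) (H.lm i a)
  else fun a => k x (H.lm i a)
termination_by i => H.numNodes - i.val
decreasing_by
  have hj := Classical.choose_spec h
  have h1 : i < Classical.choose h := by
    have h2 := H.parent_lt (Classical.choose h) hj.1
    rw [hj.2.1] at h2
    exact h2
  have h1' : i.val < (Classical.choose h).val := h1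
  have h2 := (Classical.choose h).isLt
  omega

open Classical in
/-- The hierarchically defined kernel `k⁽ⁱ⁾` at node `i`: for a leaf it is `k` itself; for an
internal node it equals `k⁽ʲ⁾(x,x')` when `x,x'` belong to a common child `j`, and
`ψ⁽ⁱ⁾(x,X̄ᵢ)·K(X̄ᵢ,X̄ᵢ)⁻¹·ψ⁽ⁱ⁾(X̄ᵢ,x')` otherwise. -/
noncomputable def khat (k : 𝒳 → 𝒳 → ℝ) (H : HierPartition 𝒳) :
    Fin H.numNodes → 𝒳 → 𝒳 → ℝ := fun i x x' =>
  if H.IsLeaf i then k x x'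
  else if h : ∃ j, j ≠ H.root ∧ H.parent j = i ∧ x ∈ H.S j ∧ x' ∈ H.S j then
    khat k H (Classical.choose h) x x'
  else ∑ a, ∑ b, psi k H i x a * ((Kmat k H i)⁻¹ a b) * psi k H i x' b
termination_by i x x' => H.numNodes - i.val
decreasing_by
  have hj := Classical.choose_spec h
  have h1 := H.parent_lt (Classical.choose h) hj.1
  rw [hj.2.1] at h1
  have h1' := Fin.lt_iff_val_lt_val.mp h1
  have h2 := (Classical.choose h).isLt
  omega

/-- The hierarchically compositional kernel `k_hier = k^(root)`. -/
noncomputable def kHier (k : 𝒳 → 𝒳 → ℝ) (H : HierPartition 𝒳) : 𝒳 → 𝒳 → ℝ :=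
  khat k H H.root

end HierPartition

/-- Node `u` is an ancestor of node `v` (possibly `u = v`) if `u` is obtained from `v` by
iterating the parent map. -/
def HierPartition.IsAncestor {𝒳 : Type*} (H : HierPartition 𝒳)
    (u v : Fin H.numNodes) : Prop :=
  ∃ m : ℕ, H.parent^[m] v = u

namespace HierPartition

variable {𝒳 : Type*} (H : HierPartition 𝒳)

lemma parent_le (v : Fin H.numNodes) : H.parent v ≤ v := by
  by_cases h : v = H.root
  · rw [h, H.parent_root]
  · exact le_of_lt (H.parent_lt v h)

lemma iterate_le (m : ℕ) (v : Fin H.numNodes) : H.parent^[m] v ≤ v := by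
  induction m with
  | zero => simp
  | succ n ih =>
    rw [Function.iterate_succ_apply']
    exact le_trans (H.parent_le _) ih

lemma ancestor_le {u v : Fin H.numNodes} (h : H.IsAncestor u v) : u ≤ v := by
  obtain ⟨m, hm⟩ := h
  rw [← hm]; exact H.iterate_le m v

lemma ancestor_refl (v : Fin H.numNodes) : H.IsAncestor v v := ⟨0, rfl⟩

lemma ancestor_trans {u v w : Fin H.numNodes} (h1 : H.IsAncestor u v)
    (h2 : H.IsAncestor v w) : H.IsAncestor u w := by
  obtain ⟨m, hm⟩ := h1; obtain ⟨n, hn⟩ := h2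
  exact ⟨m + n, by rw [Function.iterate_add_apply, hn, hm]⟩

lemma mem_S_parent {x : 𝒳} {v : Fin H.numNodes} (h : x ∈ H.S v) :
    x ∈ H.S (H.parent v) := by
  by_cases hv : v = H.root
  · rw [hv, H.parent_root]; rw [hv] at h; exact h
  · exact H.S_subset v hv h

lemma mem_S_ancestor {x : 𝒳} {u v : Fin H.numNodes} (h : x ∈ H.S v)
    (ha : H.IsAncestor u v) : x ∈ H.S u := by
  obtain ⟨m, hm⟩ := ha
  rw [← hm]; clear hm
  induction m with
  | zero => exact h
  | succ n ih => rw [Function.iterate_succ_apply']; exact H.mem_S_parent ih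

lemma exists_child {i v : Fin H.numNodes} (hne : i ≠ v) (ha : H.IsAncestor i v) :
    ∃ c, c ≠ H.root ∧ H.parent c = i ∧ H.IsAncestor c v := by
  obtain ⟨m, hm⟩ := ha
  induction m generalizing v with
  | zero => exact absurd hm.symm hne
  | succ n ih =>
    rw [Function.iterate_succ_apply] at hm
    by_cases hc : H.parent v = v
    · rw [hc] at hm; exact ih hne hm
    · by_cases hvi : H.parent v = i
      · refine ⟨v, ?_, hvi, H.ancestor_refl v⟩
        intro hroot
        rw [hroot, H.parent_root] at hc
        exact hc rfl
      · obtain ⟨c, hc1, hc2, hc3⟩ := ih (Ne.symm hvi) hm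
        exact ⟨c, hc1, hc2, H.ancestor_trans hc3 ⟨1, rfl⟩⟩

lemma child_unique {c c' : Fin H.numNodes} {x : 𝒳} (hc : c ≠ H.root)
    (hc' : c' ≠ H.root) (hp : H.parent c = H.parent c') (hx : x ∈ H.S c)
    (hx' : x ∈ H.S c') : c = c' := by
  by_contra hne
  exact Set.disjoint_left.mp (H.S_disjoint c c' hc hc' hp hne) hx hx'

lemma root_ancestor (v : Fin H.numNodes) : H.IsAncestor H.root v := by
  obtain ⟨n, hn⟩ : ∃ n, v.val < n := ⟨v.val + 1, Nat.lt_succ_self _⟩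
  induction n generalizing v with
  | zero => omega
  | succ n ih =>
    by_cases hv : v = H.root
    · rw [hv]; exact H.ancestor_refl _
    · have hlt := H.parent_lt v hv
      have := ih (H.parent v) (by omega)
      exact H.ancestor_trans this ⟨1, rfl⟩

end HierPartition
namespace HierPartition

lemma psi_eq {𝒳 : Type*} (k : 𝒳 → 𝒳 → ℝ) (H : HierPartition 𝒳)
    (hinv : ∀ i, ¬H.IsLeaf i → IsUnit (Kmat k H i).det)
    (j : Fin H.numNodes) (hjleaf : H.IsLeaf j) (x : 𝒳) (hx : x ∈ H.S j) :
    ∀ (n : ℕ) (i : Fin H.numNodes), H.numNodes - i.val ≤ n → i ≠ j →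
      H.IsAncestor i j →
      (∀ v, v ≠ j → H.IsAncestor v j → H.IsAncestor i v → v ≠ i → ∃ a, x = H.lm v a) →
      ∀ a, psi k H i x a = k x (H.lm i a) := by
  intro n
  induction n with
  | zero => intro i hn; have := i.isLt; omega
  | succ n ih =>
    intro i hn hij hanc hlm a
    obtain ⟨c, hc1, hc2, hc3⟩ := H.exists_child hij hanc
    have hxc : x ∈ H.S c := H.mem_S_ancestor hx hc3
    have h : ∃ j', j' ≠ H.root ∧ H.parent j' = i ∧ x ∈ H.S j' := ⟨c, hc1, hc2, hxc⟩
    rw [psi, dif_pos h]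
    obtain ⟨hch1, hch2, hch3⟩ := Classical.choose_spec h
    have hceq : Classical.choose h = c :=
      H.child_unique hch1 hc1 (hch2.trans hc2.symm) hch3 hxc
    rw [hceq]
    have hic : i < c := hc2 ▸ H.parent_lt c hc1
    by_cases hcl : H.IsLeaf c
    · rw [if_pos hcl]
    · rw [if_neg hcl]
      have hcj : c ≠ j := fun h' => hcl (h' ▸ hjleaf)
      have hanc_ic : H.IsAncestor i c := ⟨1, by simpa using hc2⟩
      obtain ⟨a₀, ha₀⟩ := hlm c hcj hc3 hanc_ic hic.ne'
      have hlm' : ∀ v, v ≠ j → H.IsAncestor v j → H.IsAncestor c v → v ≠ c →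
          ∃ b, x = H.lm v b := by
        intro v hvj hvancj hcancv hvc
        refine hlm v hvj hvancj (H.ancestor_trans hanc_ic hcancv) ?_
        intro h'
        rw [h'] at hcancv
        exact absurd (H.ancestor_le hcancv) (not_le.mpr hic)
      have hfuel : H.numNodes - c.val ≤ n := by
        have h1 : (i : ℕ) < (c : ℕ) := hic
        omega
      have hpsi : ∀ b, psi k H c x b = Kmat k H c a₀ b := by
        intro b
        rw [ih c hfuel hcj hc3 hlm' b, ha₀]
        rfl
      have hK : Kmat k H c * (Kmat k H c)⁻¹ = 1 :=
        Matrix.mul_nonsing_inv _ (hinv c hcl)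
      have hone : ∀ cc, (∑ b, Kmat k H c a₀ b * (Kmat k H c)⁻¹ b cc)
          = (1 : Matrix (Fin (H.nlm c)) (Fin (H.nlm c)) ℝ) a₀ cc := by
        intro cc; rw [← Matrix.mul_apply, hK]
      simp_rw [hpsi]
      rw [Finset.sum_comm]
      simp_rw [← Finset.sum_mul, hone]
      simp [Matrix.one_apply, ← ha₀]

end HierPartition
/-- let `j` and `l` be two distinct leaves with least common ancestor `r`, let
`x ∈ S_j` and `x' ∈ S_l`.  If `x` belongs to the landmark tuple of every internal node strictly
between `j` and `r` on the path from `j` to `r`, if `x'` belongs to the landmark tuple of every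
internal node strictly between `l` and `r` on the path from `l` to `r`, and if at least one of
`x, x'` belongs to the landmark tuple of `r`, then `k_hier(x,x') = k(x,x')`. -/
theorem kHier_eq_of_landmark_path {𝒳 : Type*} (k : 𝒳 → 𝒳 → ℝ)
    (hsym : ∀ x y, k x y = k y x)
    (H : HierPartition 𝒳)
    (hinv : ∀ i, ¬H.IsLeaf i → IsUnit (HierPartition.Kmat k H i).det)
    (j l r : Fin H.numNodes)
    (hjleaf : H.IsLeaf j) (hlleaf : H.IsLeaf l) (hjl : j ≠ l)
    (hrj : H.IsAncestor r j) (hrl : H.IsAncestor r l)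
    (hlca : ∀ u, H.IsAncestor u j → H.IsAncestor u l → H.IsAncestor u r)
    (x x' : 𝒳) (hx : x ∈ H.S j) (hx' : x' ∈ H.S l)
    (hxlm : ∀ v, v ≠ j → v ≠ r → H.IsAncestor v j → H.IsAncestor r v →
      ∃ a, x = H.lm v a)
    (hx'lm : ∀ v, v ≠ l → v ≠ r → H.IsAncestor v l → H.IsAncestor r v →
      ∃ a, x' = H.lm v a)
    (hr : (∃ a, x = H.lm r a) ∨ (∃ a, x' = H.lm r a)) :
    HierPartition.kHier k H x x' = k x x' := by
  classical
  open HierPartition in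
  -- r is not equal to j or l
  have hrnej : r ≠ j := by
    intro h
    subst h
    obtain ⟨c, hc1, hc2, _⟩ := H.exists_child hjl hrl
    exact hjleaf ⟨c, hc1, hc2⟩
  have hrnel : r ≠ l := by
    intro h
    subst h
    obtain ⟨c, hc1, hc2, _⟩ := H.exists_child (Ne.symm hjl) hrj
    exact hlleaf ⟨c, hc1, hc2⟩
  -- children of r toward j and l
  obtain ⟨cj, hcj1, hcj2, hcj3⟩ := H.exists_child hrnej hrj
  obtain ⟨cl, hcl1, hcl2, hcl3⟩ := H.exists_child hrnel hrl
  have hcjl : cj ≠ cl := by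
    intro h
    subst h
    have hancr : H.IsAncestor cj r := hlca cj hcj3 hcl3
    have h1 : cj ≤ r := H.ancestor_le hancr
    have h2 : r < cj := hcj2 ▸ H.parent_lt cj hcj1
    exact absurd h1 (not_le.mpr h2)
  have hrleaf : ¬H.IsLeaf r := fun h => h ⟨cj, hcj1, hcj2⟩
  have hxr : x ∈ H.S r := H.mem_S_ancestor hx hrj
  have hx'r : x' ∈ H.S l := hx'
  have hxcj : x ∈ H.S cj := H.mem_S_ancestor hx hcj3
  have hx'cl : x' ∈ H.S cl := H.mem_S_ancestor hx' hcl3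
  -- value of khat at r
  have hpsix : ∀ a, psi k H r x a = k x (H.lm r a) :=
    psi_eq k H hinv j hjleaf x hx H.numNodes r (by omega) hrnej hrj
      (fun v hvj hvancj hrancv hvr => hxlm v hvj hvr hvancj hrancv)
  have hpsix' : ∀ a, psi k H r x' a = k x' (H.lm r a) :=
    psi_eq k H hinv l hlleaf x' hx' H.numNodes r (by omega) hrnel hrl
      (fun v hvl hvancl hrancv hvr => hx'lm v hvl hvr hvancl hrancv)
  have hkhatr : khat k H r x x' = k x x' := by
    have hno : ¬∃ j', j' ≠ H.root ∧ H.parent j' = r ∧ x ∈ H.S j' ∧ x' ∈ H.S j' := by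
      rintro ⟨j', h1, h2, h3, h4⟩
      have e1 : j' = cj := H.child_unique h1 hcj1 (h2.trans hcj2.symm) h3 hxcj
      have e2 : j' = cl := H.child_unique h1 hcl1 (h2.trans hcl2.symm) h4 hx'cl
      exact hcjl (e1 ▸ e2)
    rw [khat, if_neg hrleaf, dif_neg hno]
    simp_rw [hpsix, hpsix']
    rcases hr with ⟨a₀, ha₀⟩ | ⟨b₀, hb₀⟩
    · -- x = lm r a₀
      have hK : HierPartition.Kmat k H r * (HierPartition.Kmat k H r)⁻¹ = 1 :=
        Matrix.mul_nonsing_inv _ (hinv r hrleaf)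
      have hxK : ∀ a, k x (H.lm r a) = HierPartition.Kmat k H r a₀ a := by
        intro a; rw [ha₀]; rfl
      have hone : ∀ b, (∑ a, HierPartition.Kmat k H r a₀ a *
          (HierPartition.Kmat k H r)⁻¹ a b)
          = (1 : Matrix (Fin (H.nlm r)) (Fin (H.nlm r)) ℝ) a₀ b := by
        intro b; rw [← Matrix.mul_apply, hK]
      simp_rw [hxK]
      rw [Finset.sum_comm]
      simp_rw [← Finset.sum_mul, hone]
      simp only [Matrix.one_apply, ite_mul, one_mul, zero_mul, Finset.sum_ite_eq,
        Finset.mem_univ, if_true]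
      rw [← ha₀, hsym]
    · -- x' = lm r b₀
      have hK : (HierPartition.Kmat k H r)⁻¹ * HierPartition.Kmat k H r = 1 :=
        Matrix.nonsing_inv_mul _ (hinv r hrleaf)
      have hx'K : ∀ b, k x' (H.lm r b) = HierPartition.Kmat k H r b b₀ := by
        intro b; rw [hb₀, hsym]; rfl
      have hone : ∀ a, (∑ b, (HierPartition.Kmat k H r)⁻¹ a b *
          HierPartition.Kmat k H r b b₀)
          = (1 : Matrix (Fin (H.nlm r)) (Fin (H.nlm r)) ℝ) a b₀ := by
        intro a; rw [← Matrix.mul_apply, hK]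
      simp_rw [hx'K, mul_assoc, ← Finset.mul_sum, hone]
      simp only [Matrix.one_apply, mul_ite, mul_one, mul_zero, Finset.sum_ite_eq',
        Finset.mem_univ, if_true]
      rw [← hb₀]
  -- descent from the root
  have main : ∀ (n : ℕ) (i : Fin H.numNodes), H.numNodes - i.val ≤ n →
      H.IsAncestor i r → khat k H i x x' = k x x' := by
    intro n
    induction n with
    | zero => intro i hn; have := i.isLt; omega
    | succ n ih =>
      intro i hn hir
      by_cases hireq : i = r
      · subst hireq; exact hkhatr
      · obtain ⟨c, hc1, hc2, hc3⟩ := H.exists_child hireq hir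
        have hxc : x ∈ H.S c := H.mem_S_ancestor hxr hc3
        have hx'c : x' ∈ H.S c :=
          H.mem_S_ancestor (H.mem_S_ancestor hx' hrl) hc3
        have hileaf : ¬H.IsLeaf i := fun h => h ⟨c, hc1, hc2⟩
        have h : ∃ j', j' ≠ H.root ∧ H.parent j' = i ∧ x ∈ H.S j' ∧ x' ∈ H.S j' :=
          ⟨c, hc1, hc2, hxc, hx'c⟩
        rw [khat, if_neg hileaf, dif_pos h]
        obtain ⟨hch1, hch2, hch3, _⟩ := Classical.choose_spec h
        have hceq : Classical.choose h = c :=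
          H.child_unique hch1 hc1 (hch2.trans hc2.symm) hch3 hxc
        rw [hceq]
        have hic : i < c := hc2 ▸ H.parent_lt c hc1
        have hfuel : H.numNodes - c.val ≤ n := by
          have h1 : (i : ℕ) < (c : ℕ) := hic
          omega
        exact ih c hfuel hc3
  exact main H.numNodes H.root (by omega) (H.root_ancestor r)
end

section
/- Let k be a positive-definite kernel on 𝒳 and let (T, {S_i}, {X̄_i}) be a hierarchical partitioning of 𝒳 (as in the context), with K(X̄_i,X̄_i) invertible for every internal node i. For each node i of T define ξ^(i) on S_i × S_i as follows: if i is a leaf with parent p, ξ^(i)(x,x') = k(x,x') − k(x,X̄_p)·K(X̄_p,X̄_p)⁻¹·k(X̄_p,x'); if i is internal and not the root, with parent p, ξ^(i)(x,x') = ψ^(i)(x,X̄_i)·K(X̄_i,X̄_i)⁻¹·[K(X̄_i,X̄_i) − K(X̄_i,X̄_p)·K(X̄_p,X̄_p)⁻¹·K(X̄_p,X̄_i)]·K(X̄_i,X̄_i)⁻¹·ψ^(i)(X̄_i,x'); and if i is the root, ξ^(i)(x,x') = ψ^(i)(x,X̄_i)·K(X̄_i,X̄_i)⁻¹·ψ^(i)(X̄_i,x').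 Then for every node i of T, ξ^(i) is a positive-definite kernel on S_i: for every finite list of pairwise distinct points x₁,…,xₘ ∈ S_i and all real α₁,…,αₘ, ∑_{a,b} α_a α_b ξ^(i)(x_a,x_b) ≥ 0. -/
open scoped BigOperators

namespace HierPartition

open Classical in
/-- The kernel `ξ⁽ⁱ⁾` associated with node `i` (extended by the same formulas to all of
`𝒳 × 𝒳`): for a leaf `i` with parent `p`,
`ξ⁽ⁱ⁾(x,x') = k(x,x') − k(x,X̄ₚ)K(X̄ₚ,X̄ₚ)⁻¹k(X̄ₚ,x')`; for an internal nonroot `i` with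
parent `p`,
`ξ⁽ⁱ⁾(x,x') = ψ⁽ⁱ⁾(x,X̄ᵢ)K(X̄ᵢ,X̄ᵢ)⁻¹[K(X̄ᵢ,X̄ᵢ) − K(X̄ᵢ,X̄ₚ)K(X̄ₚ,X̄ₚ)⁻¹K(X̄ₚ,X̄ᵢ)]K(X̄ᵢ,X̄ᵢ)⁻¹ψ⁽ⁱ⁾(X̄ᵢ,x')`;
and for the root, `ξ⁽ⁱ⁾(x,x') = ψ⁽ⁱ⁾(x,X̄ᵢ)K(X̄ᵢ,X̄ᵢ)⁻¹ψ⁽ⁱ⁾(X̄ᵢ,x')`. -/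
noncomputable def xi {𝒳 : Type*} (k : 𝒳 → 𝒳 → ℝ) (H : HierPartition 𝒳)
    (i : Fin H.numNodes) (x x' : 𝒳) : ℝ :=
  if i = H.root then
    ∑ a, ∑ b, psi k H i x a * ((Kmat k H i)⁻¹ a b) * psi k H i x' b
  else if H.IsLeaf i then
    k x x' - ∑ a, ∑ b,
      k x (H.lm (H.parent i) a) * ((Kmat k H (H.parent i))⁻¹ a b) * k (H.lm (H.parent i) b) x'
  else
    ∑ a, ∑ b, psi k H i x a *
      (((Kmat k H i)⁻¹ *
        (Kmat k H i -
          (Matrix.of fun a b => k (H.lm i a) (H.lm (H.parent i) b)) *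
            (Kmat k H (H.parent i))⁻¹ *
            (Matrix.of fun a b => k (H.lm (H.parent i) a) (H.lm i b))) *
        (Kmat k H i)⁻¹) a b) * psi k H i x' b

end HierPartition


section AuxPosDef

open Matrix

variable {𝒳 : Type*} {k : 𝒳 → 𝒳 → ℝ}

/-- Positive-definiteness extends to arbitrary (not necessarily injective) finite tuples. -/
lemma quad_nonneg_aux (hk : PosDefKernel k) {ι : Type*} [Fintype ι]
    (x : ι → 𝒳) (α : ι → ℝ) :
    0 ≤ ∑ i, ∑ j, α i * α j * k (x i) (x j) := by
  classical
  set t := Finset.image x Finset.univ with ht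
  let e : {a // a ∈ t} ≃ Fin t.card := t.equivFin
  set y : Fin t.card → 𝒳 := fun c => (e.symm c : 𝒳) with hy
  have hyinj : Function.Injective y := fun c d h => e.symm.injective (Subtype.ext h)
  have hmem : ∀ i, x i ∈ t := fun i => Finset.mem_image_of_mem x (Finset.mem_univ i)
  set g : ι → Fin t.card := fun i => e ⟨x i, hmem i⟩ with hg
  have hxy : ∀ i, y (g i) = x i := fun i => by simp [hy, hg]
  set β : Fin t.card → ℝ := fun c => ∑ i ∈ Finset.univ.filter fun i => g i = c, α i with hβ
  have key : ∑ c, ∑ d, β c * β d * k (y c) (y d)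
      = ∑ i, ∑ j, α i * α j * k (x i) (x j) := by
    have step : ∀ c d, β c * β d * k (y c) (y d)
        = ∑ i ∈ Finset.univ.filter fun i => g i = c,
            ∑ j ∈ Finset.univ.filter fun j => g j = d, α i * α j * k (x i) (x j) := by
      intro c d
      rw [hβ, Finset.sum_mul_sum, Finset.sum_mul]
      refine Finset.sum_congr rfl fun i hi => ?_
      rw [Finset.sum_mul]
      refine Finset.sum_congr rfl fun j hj => ?_
      have hgi : g i = c := (Finset.mem_filter.mp hi).2
      have hgj : g j = d := (Finset.mem_filter.mp hj).2
      rw [← hgi, ← hgj, hxy i, hxy j]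
    calc ∑ c, ∑ d, β c * β d * k (y c) (y d)
        = ∑ c, ∑ i ∈ Finset.univ.filter fun i => g i = c,
            ∑ j, α i * α j * k (x i) (x j) := by
          refine Finset.sum_congr rfl fun c _ => ?_
          rw [show (∑ d, β c * β d * k (y c) (y d))
              = ∑ d, ∑ i ∈ Finset.univ.filter fun i => g i = c,
                  ∑ j ∈ Finset.univ.filter fun j => g j = d, α i * α j * k (x i) (x j) from
            Finset.sum_congr rfl fun d _ => step c d]
          rw [Finset.sum_comm]
          refine Finset.sum_congr rfl fun i _ => ?_
          exact Finset.sum_fiberwise Finset.univ g _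
      _ = ∑ i, ∑ j, α i * α j * k (x i) (x j) :=
          Finset.sum_fiberwise Finset.univ g _
  rw [← key]
  exact hk t.card y hyinj β

/-- The kernel matrix of any finite tuple is positive semidefinite. -/
lemma kernelMat_psd (hsym : ∀ x y, k x y = k y x) (hk : PosDefKernel k)
    {ι : Type*} [Fintype ι] (x : ι → 𝒳) :
    (Matrix.of fun a b => k (x a) (x b)).PosSemidef := by
  refine Matrix.PosSemidef.of_dotProduct_mulVec_nonneg ?_ fun v => ?_
  · ext a b
    simp [Matrix.conjTranspose_apply, hsym (x b) (x a)]
  · have e : star v ⬝ᵥ (Matrix.of fun a b => k (x a) (x b)) *ᵥ v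
        = ∑ a, ∑ b, v a * v b * k (x a) (x b) := by
      simp only [star_trivial, dotProduct, Matrix.mulVec, Matrix.of_apply,
        Finset.mul_sum]
      exact Finset.sum_congr rfl fun a _ => Finset.sum_congr rfl fun b _ => by ring
    rw [e]
    exact quad_nonneg_aux hk x v

lemma psd_quad1 {ι : Type*} [Fintype ι] {N : Matrix ι ι ℝ} (hN : N.PosSemidef)
    (α : ι → ℝ) : 0 ≤ ∑ c, ∑ d, α c * α d * N c d := by
  have h := hN.dotProduct_mulVec_nonneg α
  have e : star α ⬝ᵥ N *ᵥ α = ∑ c, ∑ d, α c * α d * N c d := by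
    simp only [star_trivial, dotProduct, Matrix.mulVec, Finset.mul_sum]
    exact Finset.sum_congr rfl fun c _ => Finset.sum_congr rfl fun d _ => by ring
  rwa [e] at h

lemma psd_quad2 {ι : Type*} [Fintype ι] {M : Matrix ι ι ℝ} (hM : M.PosSemidef)
    {m : ℕ} (α : Fin m → ℝ) (φ : Fin m → ι → ℝ) :
    0 ≤ ∑ c, ∑ d, α c * α d * ∑ a, ∑ b, φ c a * M a b * φ d b := by
  have hN : (Matrix.of φ * M * (Matrix.of φ)ᵀ).PosSemidef := by
    have h := hM.mul_mul_conjTranspose_same (Matrix.of φ)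
    rwa [show (Matrix.of φ)ᴴ = (Matrix.of φ)ᵀ from by ext a b; simp] at h
  have h := psd_quad1 hN α
  have e : ∀ c d : Fin m, (Matrix.of φ * M * (Matrix.of φ)ᵀ) c d
      = ∑ a, ∑ b, φ c a * M a b * φ d b := by
    intro c d
    simp only [Matrix.mul_apply, Matrix.of_apply, Matrix.transpose_apply, Finset.sum_mul]
    exact Finset.sum_comm
  calc (0:ℝ) ≤ ∑ c, ∑ d, α c * α d * (Matrix.of φ * M * (Matrix.of φ)ᵀ) c d := h
    _ = _ := by
        refine Finset.sum_congr rfl fun c _ => Finset.sum_congr rfl fun d _ => ?_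
        rw [e c d]

lemma psd_posDef {ι : Type*} [Fintype ι] [DecidableEq ι] {M : Matrix ι ι ℝ}
    (hM : M.PosSemidef) (hd : IsUnit M.det) : M.PosDef := by
  refine Matrix.PosDef.of_dotProduct_mulVec_pos hM.1 fun v hv => ?_
  rcases lt_or_eq_of_le (hM.dotProduct_mulVec_nonneg v) with h | h
  · exact h
  · exfalso
    apply hv
    have h0 : M *ᵥ v = 0 := (hM.dotProduct_mulVec_zero_iff v).mp h.symm
    have h1 := congrArg (fun w => M⁻¹ *ᵥ w) h0
    simpa [Matrix.mulVec_mulVec, Matrix.nonsing_inv_mul _ hd] using h1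

/-- Schur complements of kernel matrices are positive semidefinite. -/
lemma schur_psd (hsym : ∀ x y, k x y = k y x) (hk : PosDefKernel k)
    {ι κ : Type*} [Fintype ι] [Fintype κ] [DecidableEq κ]
    (y : ι → 𝒳) (z : κ → 𝒳) :
    ((Matrix.of fun a b => k (y a) (y b)) -
      (Matrix.of fun a b => k (y a) (z b)) * (Matrix.of fun a b => k (z a) (z b))⁻¹ *
      (Matrix.of fun a b => k (z a) (y b))).PosSemidef := by
  classical
  set G : Matrix ι ι ℝ := Matrix.of fun a b => k (y a) (y b) with hG
  set C : Matrix ι κ ℝ := Matrix.of fun a b => k (y a) (z b) with hC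
  set P : Matrix κ κ ℝ := Matrix.of fun a b => k (z a) (z b) with hP
  have hCH : Cᴴ = Matrix.of fun a b => k (z a) (y b) := by
    ext a b
    simp [hC, Matrix.conjTranspose_apply, hsym (y b) (z a)]
  by_cases hdet : IsUnit P.det
  · have hPpsd : P.PosSemidef := kernelMat_psd hsym hk z
    have hPdef : P.PosDef := psd_posDef hPpsd hdet
    have : Invertible P := P.invertibleOfIsUnitDet hdet
    have hblocks : (Matrix.fromBlocks G C Cᴴ P).PosSemidef := by
      have hbig := kernelMat_psd hsym hk (Sum.elim y z)
      have heq : (Matrix.of fun a b => k (Sum.elim y z a) (Sum.elim y z b))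
          = Matrix.fromBlocks G C Cᴴ P := by
        ext a b
        cases a <;> cases b <;>
          simp [hG, hC, hP, hCH, Matrix.fromBlocks, Matrix.conjTranspose_apply, hsym]
      rwa [heq] at hbig
    have hres := (Matrix.PosDef.fromBlocks₂₂ G C hPdef).mp hblocks
    rwa [hCH] at hres
  · rw [Matrix.nonsing_inv_apply_not_isUnit _ hdet]
    simpa using kernelMat_psd hsym hk y

end AuxPosDef

/-- if `k` is a positive-definite kernel, then for every node `i` the kernel
`ξ⁽ⁱ⁾` is positive-definite on `Sᵢ`: for every finite list of pairwise distinct points of `Sᵢ`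
and all real coefficients, `∑_{a,b} α_a α_b ξ⁽ⁱ⁾(x_a,x_b) ≥ 0`. -/
theorem xi_posDefKernel {𝒳 : Type*} (k : 𝒳 → 𝒳 → ℝ)
    (hsym : ∀ x y, k x y = k y x)
    (hk : PosDefKernel k)
    (H : HierPartition 𝒳)
    (hinv : ∀ i, ¬H.IsLeaf i → IsUnit (HierPartition.Kmat k H i).det) :
    ∀ (i : Fin H.numNodes) (m : ℕ) (x : Fin m → 𝒳), Function.Injective x →
      (∀ a, x a ∈ H.S i) → ∀ α : Fin m → ℝ,
        0 ≤ ∑ a, ∑ b, α a * α b * HierPartition.xi k H i (x a) (x b) := by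
  intro i m x hxinj hxmem α
  by_cases hroot : i = H.root
  · -- root case: quadratic form with PSD matrix (Kmat i)⁻¹
    have hM : ((HierPartition.Kmat k H i)⁻¹).PosSemidef :=
      (kernelMat_psd hsym hk (H.lm i)).inv
    have h := psd_quad2 hM α (fun c => HierPartition.psi k H i (x c))
    simp only [HierPartition.xi, if_pos hroot]
    exact h
  · by_cases hleaf : H.IsLeaf i
    · -- leaf case: Schur complement on the sample points and the parent's landmarks
      have hS : ((Matrix.of fun a b => k (x a) (x b)) -
          (Matrix.of fun a b => k (x a) (H.lm (H.parent i) b)) *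
            (HierPartition.Kmat k H (H.parent i))⁻¹ *
          (Matrix.of fun a b => k (H.lm (H.parent i) a) (x b))).PosSemidef :=
        schur_psd hsym hk x (H.lm (H.parent i))
      have h := psd_quad1 hS α
      have e : ∀ c d : Fin m,
          ((Matrix.of fun a b => k (x a) (x b)) -
            (Matrix.of fun a b => k (x a) (H.lm (H.parent i) b)) *
              (HierPartition.Kmat k H (H.parent i))⁻¹ *
            (Matrix.of fun a b => k (H.lm (H.parent i) a) (x b))) c d
          = HierPartition.xi k H i (x c) (x d) := by
        intro c d
        simp only [HierPartition.xi, if_neg hroot, if_pos hleaf, Matrix.sub_apply,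
          Matrix.of_apply, Matrix.mul_apply, Finset.sum_mul]
        congr 1
        exact Finset.sum_comm
      calc (0:ℝ) ≤ ∑ c, ∑ d, α c * α d *
            ((Matrix.of fun a b => k (x a) (x b)) -
              (Matrix.of fun a b => k (x a) (H.lm (H.parent i) b)) *
                (HierPartition.Kmat k H (H.parent i))⁻¹ *
              (Matrix.of fun a b => k (H.lm (H.parent i) a) (x b))) c d := h
        _ = _ := by
            refine Finset.sum_congr rfl fun c _ => Finset.sum_congr rfl fun d _ => ?_
            rw [e c d]
    · -- internal nonroot case
      have hSchur : (HierPartition.Kmat k H i -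
          (Matrix.of fun a b => k (H.lm i a) (H.lm (H.parent i) b)) *
            (HierPartition.Kmat k H (H.parent i))⁻¹ *
          (Matrix.of fun a b => k (H.lm (H.parent i) a) (H.lm i b))).PosSemidef :=
        schur_psd hsym hk (H.lm i) (H.lm (H.parent i))
      have hKinv : ((HierPartition.Kmat k H i)⁻¹).PosSemidef :=
        (kernelMat_psd hsym hk (H.lm i)).inv
      have hM : (((HierPartition.Kmat k H i)⁻¹ *
          (HierPartition.Kmat k H i -
            (Matrix.of fun a b => k (H.lm i a) (H.lm (H.parent i) b)) *
              (HierPartition.Kmat k H (H.parent i))⁻¹ *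
            (Matrix.of fun a b => k (H.lm (H.parent i) a) (H.lm i b))) *
          (HierPartition.Kmat k H i)⁻¹)).PosSemidef := by
        have h := hSchur.mul_mul_conjTranspose_same ((HierPartition.Kmat k H i)⁻¹)
        rwa [hKinv.1.eq] at h
      have h := psd_quad2 hM α (fun c => HierPartition.psi k H i (x c))
      simp only [HierPartition.xi, if_neg hroot, if_neg hleaf]
      exact h
end
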